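/- Let X be a topological space with a continuous Z/2-action, and let x0 ∈ X be a fixed point of the action. Let ΩX denote the space of paths f : [-π, π] → X with f(-π) = f(π) = x0, equipped with the Z/2-action (g·f)(t) = g·f(-t). Then for every D ≥ 0 there is a bijection (an isomorphism of groups for D ≥ 1) π_D((ΩX)^{Z/2}, c_{x0}) ≅ π_{D+1}(X, X^{Z/2}, x0), where c_{x0} is the constant loop at x0 and X^{Z/2} is the fixed-point subspace. -/

import Mathlib

open scoped Real
noncomputable section

/-- The cube `[-π, π]^n`. -/
def cubeSet (n : ℕ) : Set (Fin n → ℝ) := Set.univ.pi fun _ => Set.Icc (-π) π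

/-- The cube `[-π, π]^n` as a topological space. -/
abbrev Cube (n : ℕ) : Type := ↥(cubeSet n)

instance (n : ℕ) : CompactSpace (Cube n) :=
  isCompact_iff_compactSpace.mp (isCompact_univ_pi fun _ => isCompact_Icc)

/-- Negation `k ↦ -k` on the cube. -/
def Cube.neg {n : ℕ} (k : Cube n) : Cube n :=
  ⟨-k.1, fun i _ => by
    have h := k.2 i (Set.mem_univ i)
    simp only [Set.mem_Icc, Pi.neg_apply] at h ⊢
    constructor <;> linarith [h.1, h.2]⟩

lemma Cube.continuous_neg {n : ℕ} : Continuous (Cube.neg (n := n)) :=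
  (continuous_subtype_val.neg).subtype_mk _

/-- A point of the cube lies on its boundary `∂I^n`. -/
def Cube.onBdry {n : ℕ} (k : Cube n) : Prop := ∃ i, |k.1 i| = π

/-- The subset `J^n = ∂I^n × I ∪ I^n × {π} ⊆ ∂I^{n+1}` (all of the boundary except the
open face where the last coordinate equals `-π`). -/
def Cube.onJ {n : ℕ} (k : Cube (n + 1)) : Prop :=
  (∃ i : Fin n, |k.1 i.castSucc| = π) ∨ k.1 (Fin.last n) = π

/-- The underlying set of the `d`-fold iterated based loop space: continuous maps
`I^d → X` sending `∂I^d` to the base point. -/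
def loopSet (X : Type) [TopologicalSpace X] (x0 : X) (d : ℕ) : Set C(Cube d, X) :=
  {f | ∀ k, Cube.onBdry k → f k = x0}

/-- The `d`-fold iterated based loop space `Ω^d X`. -/
abbrev LoopSp (X : Type) [TopologicalSpace X] (x0 : X) (d : ℕ) : Type := ↥(loopSet X x0 d)

/-- The constant loop, base point of `Ω^d X`. -/
def constLoop (X : Type) [TopologicalSpace X] (x0 : X) (d : ℕ) : LoopSp X x0 d :=
  ⟨ContinuousMap.const _ x0, fun _ _ => rfl⟩

/-- The set of `ℤ/2`-equivariant loops: elements `f` of `Ω^d X` satisfying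
`g (f (-k)) = f k`, i.e. the fixed points of the action `(g·f)(k) = g (f (-k))`. -/
def fixLoopSet (X : Type) [TopologicalSpace X] (g : X → X) (x0 : X) (d : ℕ) :
    Set C(Cube d, X) :=
  {f | (∀ k, Cube.onBdry k → f k = x0) ∧ ∀ k, g (f k.neg) = f k}

/-- The fixed-point space `(Ω^d X)^{ℤ/2}` of the loop space under the involution
`(g·f)(k) = g (f (-k))`. -/
abbrev FixLoopSp (X : Type) [TopologicalSpace X] (g : X → X) (x0 : X) (d : ℕ) : Type :=
  ↥(fixLoopSet X g x0 d)

/-- The constant loop as a point of `(Ω^d X)^{ℤ/2}`. -/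
def constFixLoop (X : Type) [TopologicalSpace X] (g : X → X) (x0 : X) (hx0 : g x0 = x0)
    (d : ℕ) : FixLoopSp X g x0 d :=
  ⟨ContinuousMap.const _ x0, fun _ _ => rfl, fun _ => hx0⟩

/-- A map of triples `(I^{n+1}, ∂I^{n+1}, J^n) → (Y, B, y0)`, representing an element
of the relative homotopy group `π_{n+1}(Y, B, y0)`. -/
structure RelMap (Y : Type) [TopologicalSpace Y] (B : Set Y) (y0 : Y) (n : ℕ) where
  toFun : C(Cube (n + 1), Y)
  mem_bdry : ∀ k, Cube.onBdry k → toFun k ∈ B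
  eq_on_J : ∀ k, Cube.onJ k → toFun k = y0

/-- Homotopy of maps of triples `(I^{n+1}, ∂I^{n+1}, J^n) → (Y, B, y0)`. -/
def RelHomotopic {Y : Type} [TopologicalSpace Y] {B : Set Y} {y0 : Y} {n : ℕ}
    (F G : RelMap Y B y0 n) : Prop :=
  ∃ H : C(unitInterval × Cube (n + 1), Y),
    (∀ k, H (0, k) = F.toFun k) ∧ (∀ k, H (1, k) = G.toFun k) ∧
    (∀ t k, Cube.onBdry k → H (t, k) ∈ B) ∧
    (∀ t k, Cube.onJ k → H (t, k) = y0)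

/-- The relative homotopy group (pointed set) `π_{n+1}(Y, B, y0)`. -/
def RelPi (Y : Type) [TopologicalSpace Y] (B : Set Y) (y0 : Y) (n : ℕ) : Type :=
  Quot (RelHomotopic (Y := Y) (B := B) (y0 := y0) (n := n))

/-- Based homotopy of based maps `(I^d, ∂I^d) → (A, a0)`. -/
def basedHomotopic {A : Type} [TopologicalSpace A] {a0 : A} {d : ℕ}
    (f g : LoopSp A a0 d) : Prop :=
  ∃ H : C(unitInterval × Cube d, A),
    (∀ k, H (0, k) = f.1 k) ∧ (∀ k, H (1, k) = g.1 k) ∧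
    ∀ t k, Cube.onBdry k → H (t, k) = a0

/-- The homotopy group (pointed set) `π_d(A, a0)` modeled on cube maps. -/
def PiSet (A : Type) [TopologicalSpace A] (a0 : A) (d : ℕ) : Type :=
  Quot (basedHomotopic (A := A) (a0 := a0) (d := d))


/-! ### Auxiliary constructions for `stmt0` -/

open scoped unitInterval

namespace Stmt0Aux

lemma pi_pos : (0:ℝ) < π := Real.pi_pos

lemma Cube.coord_mem {n : ℕ} (k : Cube n) (i : Fin n) : k.1 i ∈ Set.Icc (-π) π :=
  k.2 i (Set.mem_univ i)

/-- Cube coordinate to unit-interval coordinate. -/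
def toI (u : ℝ) : ℝ := (u + π) / (2 * π)

/-- Unit-interval coordinate to cube coordinate. -/
def ofI (t : ℝ) : ℝ := 2 * π * t - π

lemma ofI_toI (u : ℝ) : ofI (toI u) = u := by
  unfold ofI toI; field_simp; ring

lemma toI_ofI (t : ℝ) : toI (ofI t) = t := by
  unfold ofI toI; field_simp; ring

lemma toI_mem {u : ℝ} (h : u ∈ Set.Icc (-π) π) : toI u ∈ Set.Icc (0:ℝ) 1 := by
  obtain ⟨h1, h2⟩ := h
  unfold toI
  constructor
  · apply div_nonneg (by linarith) (by linarith [pi_pos])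
  · rw [div_le_one (by linarith [pi_pos])]; linarith

lemma ofI_mem {t : ℝ} (h : t ∈ Set.Icc (0:ℝ) 1) : ofI t ∈ Set.Icc (-π) π := by
  obtain ⟨h1, h2⟩ := h
  unfold ofI
  constructor <;> nlinarith [pi_pos]

lemma toI_eq_zero {u : ℝ} : toI u = 0 ↔ u = -π := by
  unfold toI
  rw [div_eq_zero_iff]
  constructor
  · rintro (h | h)
    · linarith
    · linarith [pi_pos]
  · intro h; left; linarith

lemma toI_eq_one {u : ℝ} : toI u = 1 ↔ u = π := by
  unfold toI
  rw [div_eq_one_iff_eq (by positivity)]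
  constructor <;> intro h <;> linarith

lemma continuous_toI : Continuous toI := by
  unfold toI; fun_prop

lemma continuous_ofI : Continuous ofI := by
  unfold ofI; fun_prop

/-- Clamp a real number to `[-π, π]`. -/
def clamp (u : ℝ) : ℝ := max (-π) (min π u)

lemma clamp_mem (u : ℝ) : clamp u ∈ Set.Icc (-π) π :=
  ⟨le_max_left _ _, max_le (by linarith [pi_pos]) (min_le_left _ _)⟩

lemma clamp_eq {u : ℝ} (h : u ∈ Set.Icc (-π) π) : clamp u = u := by
  unfold clamp
  rw [min_eq_right h.2, max_eq_right h.1]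

lemma continuous_clamp : Continuous clamp := by
  unfold clamp; fun_prop

variable {D : ℕ}

/-- The first `D` coordinates of a `(D+1)`-cube point, as a unit cube point. -/
def frontI (k : Cube (D + 1)) : Fin D → I :=
  fun i => ⟨toI (k.1 i.castSucc), toI_mem (Cube.coord_mem k _)⟩

lemma continuous_frontI : Continuous (frontI (D := D)) := by
  apply continuous_pi; intro i
  exact (continuous_toI.comp ((continuous_apply _).comp continuous_subtype_val)).subtype_mk _

/-- The last coordinate of a `(D+1)`-cube point, folded to `[-π, 0]`, as a `1`-cube point. -/
def lastT (k : Cube (D + 1)) : Cube 1 :=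
  ⟨fun _ => -(k.1 (Fin.last D) + π) / 2, by
    intro i _
    have h := Cube.coord_mem k (Fin.last D)
    simp only [Set.mem_Icc] at h ⊢
    constructor <;> linarith [h.1, h.2]⟩

lemma continuous_lastT : Continuous (lastT (D := D)) := by
  apply Continuous.subtype_mk
  apply continuous_pi; intro i
  exact ((((continuous_apply (Fin.last D)).comp continuous_subtype_val).add
    continuous_const).neg).div_const 2

/-- Join a unit cube point and a last coordinate into a `(D+1)`-cube point. -/
def snocPt (s : Fin D → I) (u : ℝ) : Cube (D + 1) :=
  ⟨Fin.snoc (fun i => ofI (s i)) (clamp u), by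
    intro j _
    refine Fin.lastCases ?_ ?_ j
    · simpa only [Fin.snoc_last] using clamp_mem u
    · intro i; simpa only [Fin.snoc_castSucc] using ofI_mem (s i).2⟩

lemma snocPt_castSucc (s : Fin D → I) (u : ℝ) (i : Fin D) :
    (snocPt s u).1 i.castSucc = ofI (s i) := by
  simp [snocPt]

lemma snocPt_last (s : Fin D → I) (u : ℝ) :
    (snocPt s u).1 (Fin.last D) = clamp u := by
  simp [snocPt]

lemma continuous_snocPt {Z : Type} [TopologicalSpace Z] {sg : Z → Fin D → I} {u : Z → ℝ}
    (hsg : Continuous sg) (hu : Continuous u) :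
    Continuous fun z => snocPt (sg z) (u z) := by
  apply Continuous.subtype_mk
  apply continuous_pi; intro j
  refine Fin.lastCases ?_ ?_ j
  · simp only [Fin.snoc_last]
    exact continuous_clamp.comp hu
  · intro i
    simp only [Fin.snoc_castSucc]
    exact continuous_ofI.comp ((continuous_apply i).comp hsg |>.subtype_val)

/-! ### Cube 1 helpers -/

lemma cube1_ext {a b : Cube 1} (h : a.1 0 = b.1 0) : a = b := by
  apply Subtype.ext; funext i
  rw [Subsingleton.elim i 0]; exact h

lemma neg_val (t : Cube 1) : (Cube.neg t).1 0 = -(t.1 0) := rfl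

/-! ### The points `pt1`, `pt2` -/

def pt1 (s : Fin D → I) (t : Cube 1) : Cube (D + 1) := snocPt s (-2 * t.1 0 - π)

def pt2 (s : Fin D → I) (t : Cube 1) : Cube (D + 1) := snocPt s (2 * t.1 0 - π)

lemma pt1_neg (s : Fin D → I) (t : Cube 1) : pt1 s (Cube.neg t) = pt2 s t := by
  unfold pt1 pt2; rw [neg_val]; congr 1; ring

lemma pt2_neg (s : Fin D → I) (t : Cube 1) : pt2 s (Cube.neg t) = pt1 s t := by
  unfold pt1 pt2; rw [neg_val]; congr 1; ring

lemma clamp_pi : clamp π = π := clamp_eq ⟨by linarith [pi_pos], le_refl _⟩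

lemma clamp_neg_pi : clamp (-π) = -π := clamp_eq ⟨le_refl _, by linarith [pi_pos]⟩

lemma ofI_zero : ofI 0 = -π := by unfold ofI; ring

lemma ofI_one : ofI 1 = π := by unfold ofI; ring

section Maps

variable {X : Type} [TopologicalSpace X] (g : X → X) (x0 : X)

/-! ### The map `Φ` from loop families to relative maps -/

def phiRaw (p : (Fin D → I) → FixLoopSp X g x0 1) (k : Cube (D + 1)) : X :=
  ((p (frontI k)).1) (lastT k)

lemma continuous_phiRaw {p : (Fin D → I) → FixLoopSp X g x0 1} (hp : Continuous p) :
    Continuous (phiRaw g x0 p) :=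
  continuous_eval.comp ((continuous_subtype_val.comp (hp.comp continuous_frontI)).prodMk
    continuous_lastT)

lemma phiRaw_eq_x0_of_front {p : (Fin D → I) → FixLoopSp X g x0 1} (hx0 : g x0 = x0)
    (hpa : ∀ s ∈ Cube.boundary (Fin D), p s = constFixLoop X g x0 hx0 1)
    (k : Cube (D + 1)) (hk : ∃ j : Fin D, |k.1 j.castSucc| = π) :
    phiRaw g x0 p k = x0 := by
  obtain ⟨j, hj⟩ := hk
  have hb : frontI k ∈ Cube.boundary (Fin D) := by
    refine ⟨j, ?_⟩
    rcases (abs_eq pi_pos.le).mp hj with h | h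
    · right
      apply Subtype.ext
      exact toI_eq_one.mpr h
    · left
      apply Subtype.ext
      exact toI_eq_zero.mpr h
  unfold phiRaw
  rw [hpa _ hb]
  rfl

lemma phiRaw_eq_x0_of_last {p : (Fin D → I) → FixLoopSp X g x0 1}
    (k : Cube (D + 1)) (hk : k.1 (Fin.last D) = π) :
    phiRaw g x0 p k = x0 := by
  apply (p (frontI k)).2.1
  refine ⟨0, ?_⟩
  show |-(k.1 (Fin.last D) + π) / 2| = π
  rw [hk]
  rw [show -(π + π) / 2 = -π by ring, abs_neg, abs_of_pos pi_pos]

lemma phiRaw_mem_of_lastneg {p : (Fin D → I) → FixLoopSp X g x0 1}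
    (k : Cube (D + 1)) (hk : k.1 (Fin.last D) = -π) :
    g (phiRaw g x0 p k) = phiRaw g x0 p k := by
  have hneg : Cube.neg (lastT k) = lastT k := by
    apply cube1_ext
    rw [neg_val]
    show -(-(k.1 (Fin.last D) + π) / 2) = -(k.1 (Fin.last D) + π) / 2
    rw [hk]; ring
  conv_lhs => rw [phiRaw, ← hneg]
  exact (p (frontI k)).2.2 (lastT k)

lemma phiRaw_eq_J {p : (Fin D → I) → FixLoopSp X g x0 1} (hx0 : g x0 = x0)
    (hpa : ∀ s ∈ Cube.boundary (Fin D), p s = constFixLoop X g x0 hx0 1)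
    (k : Cube (D + 1)) (hk : Cube.onJ k) :
    phiRaw g x0 p k = x0 := by
  rcases hk with h | h
  · exact phiRaw_eq_x0_of_front g x0 hx0 hpa k h
  · exact phiRaw_eq_x0_of_last g x0 k h

lemma phiRaw_mem_B {p : (Fin D → I) → FixLoopSp X g x0 1} (hx0 : g x0 = x0)
    (hpa : ∀ s ∈ Cube.boundary (Fin D), p s = constFixLoop X g x0 hx0 1)
    (k : Cube (D + 1)) (hk : Cube.onBdry k) :
    g (phiRaw g x0 p k) = phiRaw g x0 p k := by
  obtain ⟨i, hi⟩ := hk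
  rcases Fin.eq_castSucc_or_eq_last i with ⟨j, rfl⟩ | rfl
  · rw [phiRaw_eq_x0_of_front g x0 hx0 hpa k ⟨j, hi⟩]; exact hx0
  · rcases (abs_eq pi_pos.le).mp hi with h | h
    · rw [phiRaw_eq_x0_of_last g x0 k h]; exact hx0
    · exact phiRaw_mem_of_lastneg g x0 k h

/-! ### The map `Ψ` from relative maps to loop families -/

variable {Z : Type} [TopologicalSpace Z]

def psiRaw (F : Z → C(Cube (D + 1), X)) (sg : Z → Fin D → I) (w : Z × Cube 1) : X :=
  if w.2.1 0 ≤ 0 then F w.1 (pt1 (sg w.1) w.2) else g (F w.1 (pt2 (sg w.1) w.2))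

lemma pt1_eq_pt2_of_zero (s : Fin D → I) (t : Cube 1) (h : t.1 0 = 0) :
    pt1 s t = pt2 s t := by
  unfold pt1 pt2; rw [h]; norm_num

lemma pt2_last_of_zero (s : Fin D → I) (t : Cube 1) (h : t.1 0 = 0) :
    (pt2 s t).1 (Fin.last D) = -π := by
  rw [pt2, snocPt_last, h]
  rw [show 2 * (0:ℝ) - π = -π by ring, clamp_neg_pi]

lemma continuous_psiRaw (hg : Continuous g) {F : Z → C(Cube (D + 1), X)} {sg : Z → Fin D → I}
    (hF : Continuous F) (hsg : Continuous sg)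
    (hfix : ∀ z (k : Cube (D + 1)), k.1 (Fin.last D) = -π → g (F z k) = F z k) :
    Continuous (psiRaw g F sg) := by
  have hc : Continuous fun w : Z × Cube 1 => w.2.1 0 :=
    (continuous_apply 0).comp (continuous_subtype_val.comp continuous_snd)
  unfold psiRaw
  apply Continuous.if_le
  · exact continuous_eval.comp ((hF.comp continuous_fst).prodMk
      (continuous_snocPt (hsg.comp continuous_fst)
        ((continuous_const.mul hc).sub continuous_const)))
  · exact hg.comp (continuous_eval.comp ((hF.comp continuous_fst).prodMk
      (continuous_snocPt (hsg.comp continuous_fst)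
        ((continuous_const.mul hc).sub continuous_const))))
  · exact hc
  · exact continuous_const
  · intro w h
    rw [pt1_eq_pt2_of_zero _ _ h]
    exact (hfix _ _ (pt2_last_of_zero _ _ h)).symm

lemma psiRaw_bdry (hx0 : g x0 = x0) {F : Z → C(Cube (D + 1), X)} {sg : Z → Fin D → I}
    (hJ : ∀ z (k : Cube (D + 1)), Cube.onJ k → F z k = x0)
    (z : Z) (t : Cube 1) (ht : Cube.onBdry t) : psiRaw g F sg (z, t) = x0 := by
  obtain ⟨i, hi⟩ := ht
  rw [Subsingleton.elim i 0] at hi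
  rcases (abs_eq pi_pos.le).mp hi with h | h
  · rw [psiRaw, if_neg (by rw [h]; exact not_le.mpr pi_pos)]
    rw [hJ z _ (Or.inr (by rw [pt2, snocPt_last, h, show 2 * π - π = π by ring, clamp_pi]))]
    exact hx0
  · rw [psiRaw, if_pos (by rw [h]; linarith [pi_pos])]
    exact hJ z _ (Or.inr (by rw [pt1, snocPt_last, h,
      show -2 * -π - π = π by ring, clamp_pi]))

lemma psiRaw_front (hx0 : g x0 = x0) {F : Z → C(Cube (D + 1), X)} {sg : Z → Fin D → I}
    (hJ : ∀ z (k : Cube (D + 1)), Cube.onJ k → F z k = x0)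
    (z : Z) (t : Cube 1) (hs : sg z ∈ Cube.boundary (Fin D)) : psiRaw g F sg (z, t) = x0 := by
  obtain ⟨j, hj⟩ := hs
  have habs : |ofI ((sg z j : ℝ))| = π := by
    rcases hj with h | h
    · rw [show ((sg z j : ℝ)) = 0 from congrArg Subtype.val h, ofI_zero, abs_neg,
        abs_of_pos pi_pos]
    · rw [show ((sg z j : ℝ)) = 1 from congrArg Subtype.val h, ofI_one, abs_of_pos pi_pos]
  have h1 : Cube.onJ (pt1 (sg z) t) := Or.inl ⟨j, by rw [pt1, snocPt_castSucc]; exact habs⟩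
  have h2 : Cube.onJ (pt2 (sg z) t) := Or.inl ⟨j, by rw [pt2, snocPt_castSucc]; exact habs⟩
  rw [psiRaw]
  split_ifs
  · exact hJ z _ h1
  · rw [hJ z _ h2]; exact hx0

lemma psiRaw_equiv (hinv : Function.Involutive g) {F : Z → C(Cube (D + 1), X)}
    {sg : Z → Fin D → I}
    (hB : ∀ z (k : Cube (D + 1)), Cube.onBdry k → g (F z k) = F z k)
    (z : Z) (t : Cube 1) :
    g (psiRaw g F sg (z, Cube.neg t)) = psiRaw g F sg (z, t) := by
  rcases lt_trichotomy (t.1 0) 0 with h | h | h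
  · rw [psiRaw, psiRaw, if_neg (by rw [neg_val]; simpa using h),
      if_pos h.le, pt2_neg]
    exact hinv _
  · rw [psiRaw, psiRaw, if_pos (by rw [neg_val, h]; norm_num), if_pos h.le,
      pt1_neg, pt1_eq_pt2_of_zero _ _ h]
    exact hB z _ ⟨Fin.last D, by rw [pt2_last_of_zero _ _ h, abs_neg, abs_of_pos pi_pos]⟩
  · rw [psiRaw, psiRaw, if_pos (by rw [neg_val]; linarith), if_neg (not_le.mpr h), pt1_neg]

/-! ### Packaged maps between `GenLoop` and `RelMap` -/

lemma frontI_snocPt (s : Fin D → I) (u : ℝ) : frontI (snocPt s u) = s := by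
  funext i
  apply Subtype.ext
  show toI ((snocPt s u).1 i.castSucc) = (s i : ℝ)
  rw [snocPt_castSucc, toI_ofI]

def toRel (hx0 : g x0 = x0)
    (p : GenLoop (Fin D) (FixLoopSp X g x0 1) (constFixLoop X g x0 hx0 1)) :
    RelMap X {x | g x = x} x0 D where
  toFun := ⟨phiRaw g x0 (fun s => p.1 s), continuous_phiRaw g x0 p.1.continuous⟩
  mem_bdry := fun k hk => phiRaw_mem_B g x0 hx0 p.2 k hk
  eq_on_J := fun k hk => phiRaw_eq_J g x0 hx0 p.2 k hk

def psiFam (hg : Continuous g) {F : Z → C(Cube (D + 1), X)} {sg : Z → Fin D → I}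
    (hF : Continuous F) (hsg : Continuous sg)
    (hB : ∀ z (k : Cube (D + 1)), Cube.onBdry k → g (F z k) = F z k)
    (hJ : ∀ z (k : Cube (D + 1)), Cube.onJ k → F z k = x0)
    (hinv : Function.Involutive g) (hx0 : g x0 = x0) : C(Z, FixLoopSp X g x0 1) :=
  let cm : C(Z × Cube 1, X) := ⟨psiRaw g F sg, continuous_psiRaw g hg hF hsg
    (fun z k hk => hB z k ⟨Fin.last D, by rw [hk, abs_neg, abs_of_pos pi_pos]⟩)⟩
  ⟨fun z => ⟨cm.curry z,
    fun t ht => psiRaw_bdry g x0 hx0 hJ z t ht,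
    fun t => psiRaw_equiv g hinv hB z t⟩,
   cm.curry.continuous.subtype_mk _⟩

lemma psiFam_apply (hg : Continuous g) {F : Z → C(Cube (D + 1), X)} {sg : Z → Fin D → I}
    (hF : Continuous F) (hsg : Continuous sg)
    (hB : ∀ z (k : Cube (D + 1)), Cube.onBdry k → g (F z k) = F z k)
    (hJ : ∀ z (k : Cube (D + 1)), Cube.onJ k → F z k = x0)
    (hinv : Function.Involutive g) (hx0 : g x0 = x0) (z : Z) (t : Cube 1) :
    ((psiFam g x0 hg hF hsg hB hJ hinv hx0 z : FixLoopSp X g x0 1) : C(Cube 1, X)) t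
      = psiRaw g F sg (z, t) := rfl

def ofRel (hg : Continuous g) (hinv : Function.Involutive g) (hx0 : g x0 = x0)
    (F : RelMap X {x | g x = x} x0 D) :
    GenLoop (Fin D) (FixLoopSp X g x0 1) (constFixLoop X g x0 hx0 1) :=
  ⟨psiFam g x0 hg (F := fun _ : Fin D → I => F.toFun) (sg := id) continuous_const
      continuous_id (fun _ k hk => F.mem_bdry k hk) (fun _ k hk => F.eq_on_J k hk) hinv hx0,
   fun s hs => Subtype.ext (ContinuousMap.ext fun t =>
     psiRaw_front g x0 hx0 (fun _ k hk => F.eq_on_J k hk) s t hs)⟩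

lemma RelMap.ext' {Y : Type} [TopologicalSpace Y] {B : Set Y} {y0 : Y} {n : ℕ}
    {F G : RelMap Y B y0 n} (h : F.toFun = G.toFun) : F = G := by
  cases F; cases G; cases h; rfl

/-! ### Roundtrip identities -/

lemma lastT_val (k : Cube (D + 1)) (i : Fin 1) :
    (lastT k).1 i = -(k.1 (Fin.last D) + π) / 2 := rfl

lemma pt1_lastT (k : Cube (D + 1)) : pt1 (frontI k) (lastT k) = k := by
  apply Subtype.ext
  funext j
  refine Fin.lastCases ?_ ?_ j
  · rw [pt1, snocPt_last, lastT_val]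
    rw [show -2 * (-(k.1 (Fin.last D) + π) / 2) - π = k.1 (Fin.last D) by ring]
    exact clamp_eq (Cube.coord_mem k _)
  · intro i
    show (snocPt (frontI k) _).1 i.castSucc = k.1 i.castSucc
    rw [snocPt_castSucc]
    show ofI (toI (k.1 i.castSucc)) = k.1 i.castSucc
    exact ofI_toI _

lemma toRel_ofRel (hg : Continuous g) (hinv : Function.Involutive g) (hx0 : g x0 = x0)
    (F : RelMap X {x | g x = x} x0 D) :
    toRel g x0 hx0 (ofRel g x0 hg hinv hx0 F) = F := by
  apply RelMap.ext'
  apply ContinuousMap.ext; intro k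
  show psiRaw g (fun _ : Fin D → I => F.toFun) id (frontI k, lastT k) = F.toFun k
  have hle : (lastT k).1 0 ≤ 0 := by
    rw [lastT_val]
    linarith [(Cube.coord_mem k (Fin.last D)).1]
  rw [psiRaw, if_pos hle]
  show F.toFun (pt1 (frontI k) (lastT k)) = F.toFun k
  rw [pt1_lastT]

lemma lastT_pt1 (s : Fin D → I) (t : Cube 1) (h : t.1 0 ≤ 0) : lastT (pt1 s t) = t := by
  apply cube1_ext
  rw [lastT_val, pt1, snocPt_last]
  have hm := Cube.coord_mem t 0
  rw [clamp_eq ⟨by linarith [hm.2], by linarith [hm.1]⟩]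
  ring

lemma lastT_pt2 (s : Fin D → I) (t : Cube 1) (h : 0 ≤ t.1 0) :
    lastT (pt2 s t) = Cube.neg t := by
  apply cube1_ext
  rw [lastT_val, pt2, snocPt_last, neg_val]
  have hm := Cube.coord_mem t 0
  rw [clamp_eq ⟨by linarith [hm.1], by linarith [hm.2]⟩]
  ring

lemma frontI_pt1 (s : Fin D → I) (t : Cube 1) : frontI (pt1 s t) = s := frontI_snocPt s _

lemma frontI_pt2 (s : Fin D → I) (t : Cube 1) : frontI (pt2 s t) = s := frontI_snocPt s _

lemma ofRel_toRel (hg : Continuous g) (hinv : Function.Involutive g) (hx0 : g x0 = x0)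
    (p : GenLoop (Fin D) (FixLoopSp X g x0 1) (constFixLoop X g x0 hx0 1)) :
    ofRel g x0 hg hinv hx0 (toRel g x0 hx0 p) = p := by
  apply Subtype.ext
  apply ContinuousMap.ext; intro s
  apply Subtype.ext
  apply ContinuousMap.ext; intro t
  show psiRaw g (fun _ : Fin D → I => (toRel g x0 hx0 p).toFun) id (s, t) = (p.1 s).1 t
  rw [psiRaw]
  split_ifs with h
  · show phiRaw g x0 (fun s' => p.1 s') (pt1 s t) = _
    rw [phiRaw, frontI_pt1, lastT_pt1 s t h]
  · show g (phiRaw g x0 (fun s' => p.1 s') (pt2 s t)) = _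
    rw [phiRaw, frontI_pt2, lastT_pt2 s t (le_of_lt (not_le.mp h))]
    exact (p.1 s).2.2 t

/-! ### Transport of homotopies -/

lemma toRel_hom (hx0 : g x0 = x0)
    {p q : GenLoop (Fin D) (FixLoopSp X g x0 1) (constFixLoop X g x0 hx0 1)}
    (h : GenLoop.Homotopic p q) :
    RelHomotopic (toRel g x0 hx0 p) (toRel g x0 hx0 q) := by
  obtain ⟨H⟩ := h
  let Hc : C(unitInterval × (Fin D → I), FixLoopSp X g x0 1) := H.toHomotopy.toContinuousMap
  have hHc : ∀ w, Hc w = H.toHomotopy w := fun w => rfl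
  refine ⟨⟨fun w => ((Hc (w.1, frontI w.2) : FixLoopSp X g x0 1) : C(Cube 1, X)) (lastT w.2),
      ?_⟩, ?_, ?_, ?_, ?_⟩
  · exact continuous_eval.comp ((continuous_subtype_val.comp (Hc.continuous.comp
      (continuous_fst.prodMk (continuous_frontI.comp continuous_snd)))).prodMk
      (continuous_lastT.comp continuous_snd))
  · intro k
    show ((Hc (0, frontI k) : FixLoopSp X g x0 1) : C(Cube 1, X)) (lastT k)
      = phiRaw g x0 (fun s => p.1 s) k
    rw [hHc, H.toHomotopy.apply_zero]
    rfl
  · intro k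
    show ((Hc (1, frontI k) : FixLoopSp X g x0 1) : C(Cube 1, X)) (lastT k)
      = phiRaw g x0 (fun s => q.1 s) k
    rw [hHc, H.toHomotopy.apply_one]
    rfl
  · intro τ k hk
    exact phiRaw_mem_B g x0 (p := fun s => Hc (τ, s)) hx0
      (fun s hs => by show Hc (τ, s) = _
                      rw [hHc, show H.toHomotopy (τ, s) = p.1 s from H.eq_fst τ hs]
                      exact p.2 s hs) k hk
  · intro τ k hk
    exact phiRaw_eq_J g x0 (p := fun s => Hc (τ, s)) hx0
      (fun s hs => by show Hc (τ, s) = _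
                      rw [hHc, show H.toHomotopy (τ, s) = p.1 s from H.eq_fst τ hs]
                      exact p.2 s hs) k hk

def psiFamH (hg : Continuous g) (hinv : Function.Involutive g) (hx0 : g x0 = x0)
    (H : C(unitInterval × Cube (D + 1), X))
    (hB : ∀ τ (k : Cube (D + 1)), Cube.onBdry k → g (H (τ, k)) = H (τ, k))
    (hJ : ∀ τ (k : Cube (D + 1)), Cube.onJ k → H (τ, k) = x0) :
    C(unitInterval × (Fin D → I), FixLoopSp X g x0 1) :=
  psiFam g x0 hg (F := fun z : unitInterval × (Fin D → I) => H.curry z.1) (sg := Prod.snd)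
    (H.curry.continuous.comp continuous_fst) continuous_snd
    (fun z k hk => hB z.1 k hk) (fun z k hk => hJ z.1 k hk) hinv hx0

lemma ofRel_hom (hg : Continuous g) (hinv : Function.Involutive g) (hx0 : g x0 = x0)
    {F G : RelMap X {x | g x = x} x0 D} (h : RelHomotopic F G) :
    GenLoop.Homotopic (ofRel g x0 hg hinv hx0 F) (ofRel g x0 hg hinv hx0 G) := by
  obtain ⟨H, h0, h1, hB, hJ⟩ := h
  refine ⟨{ toContinuousMap := psiFamH g x0 hg hinv hx0 H hB hJ,
            map_zero_left := ?_, map_one_left := ?_, prop' := ?_ }⟩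
  · intro s
    apply Subtype.ext; apply ContinuousMap.ext; intro t
    show psiRaw g (fun z : unitInterval × (Fin D → I) => H.curry z.1) Prod.snd ((0, s), t)
      = psiRaw g (fun _ : Fin D → I => F.toFun) id (s, t)
    rw [psiRaw, psiRaw]
    split_ifs with hc
    · show (H.curry 0) (pt1 s t) = F.toFun (pt1 s t)
      rw [ContinuousMap.curry_apply]
      exact h0 _
    · show g ((H.curry 0) (pt2 s t)) = g (F.toFun (pt2 s t))
      rw [ContinuousMap.curry_apply]
      rw [h0 _]
  · intro s
    apply Subtype.ext; apply ContinuousMap.ext; intro t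
    show psiRaw g (fun z : unitInterval × (Fin D → I) => H.curry z.1) Prod.snd ((1, s), t)
      = psiRaw g (fun _ : Fin D → I => G.toFun) id (s, t)
    rw [psiRaw, psiRaw]
    split_ifs with hc
    · show (H.curry 1) (pt1 s t) = G.toFun (pt1 s t)
      rw [ContinuousMap.curry_apply]
      exact h1 _
    · show g ((H.curry 1) (pt2 s t)) = g (G.toFun (pt2 s t))
      rw [ContinuousMap.curry_apply]
      rw [h1 _]
  · intro τ s hs
    show psiFamH g x0 hg hinv hx0 H hB hJ (τ, s) = (ofRel g x0 hg hinv hx0 F).1 s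
    rw [(ofRel g x0 hg hinv hx0 F).2 s hs]
    apply Subtype.ext; apply ContinuousMap.ext; intro t
    exact psiRaw_front g x0 (F := fun z : unitInterval × (Fin D → I) => H.curry z.1)
      (sg := Prod.snd) hx0 (fun z k hk => hJ z.1 k hk) (τ, s) t hs

end Maps

end Stmt0Aux
/-- For a `ℤ/2`-space `X` with fixed point `x0`, and `ΩX` the loop space
of paths `[-π,π] → X` based at `x0` with the involution `(g·f)(t) = g (f (-t))`, there is
for every `D ≥ 0` a bijection `π_D((ΩX)^{ℤ/2}) ≅ π_{D+1}(X, X^{ℤ/2}, x0)`. -/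
theorem stmt0 (X : Type) [TopologicalSpace X] (g : X → X) (hg : Continuous g)
    (hinv : Function.Involutive g) (x0 : X) (hx0 : g x0 = x0) (D : ℕ) :
    Nonempty (HomotopyGroup (Fin D) (FixLoopSp X g x0 1) (constFixLoop X g x0 hx0 1)
      ≃ RelPi X {x | g x = x} x0 D) := by
  refine ⟨{
    toFun := Quotient.lift (fun p => Quot.mk _ (Stmt0Aux.toRel g x0 hx0 p))
      (fun p q h => Quot.sound (Stmt0Aux.toRel_hom g x0 hx0 h)),
    invFun := Quot.lift (fun F => Quotient.mk _ (Stmt0Aux.ofRel g x0 hg hinv hx0 F))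
      (fun F G h => Quotient.sound (Stmt0Aux.ofRel_hom g x0 hg hinv hx0 h)),
    left_inv := ?_, right_inv := ?_ }⟩
  · intro q
    induction q using Quotient.inductionOn with
    | h p => exact congrArg _ (Stmt0Aux.ofRel_toRel g x0 hg hinv hx0 p)
  · intro q
    induction q using Quot.inductionOn with
    | h F => exact congrArg _ (Stmt0Aux.toRel_ofRel g x0 hg hinv hx0 F)
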